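/- Let R be a ring, 𝓕 a torsion notion, M an 𝓕-torsion-free R-module, S a submodule, and S̄ = {m : ∃ A ∈ 𝓕, A•m ⊆ S}. Then S̄ is the least submodule T ⊇ S such that M/T is 𝓕-torsion-free: for any submodule T with S ⊆ T and M/T 𝓕-torsion-free, S̄ ⊆ T. -/
import Mathlib


/-- A torsion notion for a ring `R`: a nonempty collection of finitely generated
left ideals that is upward closed among finitely generated left ideals,
downward directed, closed under generation by products of finite generating
sets, satisfies the translation condition (4), and whose members are regular. -/
structure TorsionNotion (R : Type*) [Ring R] where
  F : Set (Ideal R)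
  nonempty : F.Nonempty
  fg : ∀ A ∈ F, A.FG
  upward : ∀ A ∈ F, ∀ B : Ideal R, B.FG → A ≤ B → B ∈ F
  directed : ∀ A ∈ F, ∀ B ∈ F, ∃ C ∈ F, C ≤ A ∧ C ≤ B
  prod : ∀ X Y : Finset R, Ideal.span (X : Set R) ∈ F → Ideal.span (Y : Set R) ∈ F →
      Ideal.span {r : R | ∃ x ∈ X, ∃ y ∈ Y, r = x * y} ∈ F
  cond4 : ∀ A ∈ F, ∀ r : R, ∃ B ∈ F, ∀ b ∈ B, b * r ∈ A
  reg : ∀ A ∈ F, ∀ r : R, (∀ a ∈ A, a * r = 0) → r = 0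

/-- `S̄ = {m | ∃ A ∈ 𝓕, A•m ⊆ S}` is the least submodule `T ⊇ S`
with `M/T` `𝓕`-torsion-free: (a) `M/S̄` is `𝓕`-torsion-free, and (b) any `T ⊇ S`
with `M/T` `𝓕`-torsion-free contains `S̄`. -/
theorem stmt_13 (R : Type*) [Ring R] (𝓕 : TorsionNotion R)
    (M : Type*) [AddCommGroup M] [Module R M]
    (hM : ∀ m : M, ∀ A ∈ 𝓕.F, (∀ a ∈ A, a • m = 0) → m = 0)
    (S : Submodule R M) :
    (∀ m : M, ∀ A ∈ 𝓕.F,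
        (∀ a ∈ A, a • m ∈ {x : M | ∃ B ∈ 𝓕.F, ∀ b ∈ B, b • x ∈ S}) →
        m ∈ {x : M | ∃ B ∈ 𝓕.F, ∀ b ∈ B, b • x ∈ S}) ∧
      (∀ T : Submodule R M, S ≤ T →
        (∀ m : M, ∀ A ∈ 𝓕.F, (∀ a ∈ A, a • m ∈ T) → m ∈ T) →
        ∀ m ∈ {x : M | ∃ B ∈ 𝓕.F, ∀ b ∈ B, b • x ∈ S}, m ∈ T) := by
  classical
  have dir : ∀ (X : Finset R) (g : R → Ideal R), (∀ x ∈ X, g x ∈ 𝓕.F) →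
      ∃ C ∈ 𝓕.F, ∀ x ∈ X, C ≤ g x := by
    intro X
    induction X using Finset.cons_induction with
    | empty =>
      intro g _
      obtain ⟨C, hC⟩ := 𝓕.nonempty
      exact ⟨C, hC, by simp⟩
    | cons a s ha ih =>
      intro g hg
      obtain ⟨C, hC, hCle⟩ := ih g (fun x hx => hg x (Finset.mem_cons_of_mem hx))
      obtain ⟨D, hD, hD1, hD2⟩ := 𝓕.directed C hC (g a) (hg a (Finset.mem_cons_self a s))
      refine ⟨D, hD, ?_⟩
      intro x hx
      rcases Finset.mem_cons.mp hx with rfl | hx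
      · exact hD2
      · exact le_trans hD1 (hCle x hx)
  constructor
  · intro m A hA hAm
    obtain ⟨X, hX⟩ := 𝓕.fg A hA
    have hB : ∀ x ∈ X, ∃ B ∈ 𝓕.F, ∀ b ∈ B, b • (x • m) ∈ S := by
      intro x hx
      exact hAm x (hX ▸ Ideal.subset_span hx)
    set g : R → Ideal R := fun x =>
      if h : ∃ B ∈ 𝓕.F, ∀ b ∈ B, b • (x • m) ∈ S then h.choose else ⊥ with hg
    have hgF : ∀ x ∈ X, g x ∈ 𝓕.F := by
      intro x hx
      have h := hB x hx
      simp only [hg, dif_pos h]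
      exact h.choose_spec.1
    have hgS : ∀ x ∈ X, ∀ b ∈ g x, b • (x • m) ∈ S := by
      intro x hx
      have h := hB x hx
      simp only [hg, dif_pos h]
      exact h.choose_spec.2
    obtain ⟨C, hC, hCle⟩ := dir X g hgF
    obtain ⟨Y, hY⟩ := 𝓕.fg C hC
    have hYF : Ideal.span (Y : Set R) ∈ 𝓕.F := by rw [hY]; exact hC
    have hXF : Ideal.span (X : Set R) ∈ 𝓕.F := by rw [hX]; exact hA
    refine ⟨_, 𝓕.prod Y X hYF hXF, ?_⟩
    intro b hb
    refine Submodule.span_induction ?_ ?_ ?_ ?_ hb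
    · rintro r ⟨y, hy, x, hx, rfl⟩
      rw [mul_smul]
      exact hgS x hx y (hCle x hx (hY ▸ Ideal.subset_span hy))
    · simp
    · intro p q _ _ hp hq
      rw [add_smul]
      exact S.add_mem hp hq
    · intro r p _ hp
      rw [smul_eq_mul, mul_smul]
      exact S.smul_mem r hp
  · rintro T hST hT m ⟨B, hB, hBm⟩
    exact hT m B hB (fun b hb => hST (hBm b hb))
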